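/- Let D ⊂ ℝ² be the closed unit disc, and let x̃₁ = (2/√π)·x₁, x̃₂ = (2/√π)·x₂. For every (a,b) ∈ ℝ² with (a,b) ≠ (0,0), setting φ = a·x̃₁ + b·x̃₂ and Φ = φ² − (1/π)(a²+b²), the quantity Q(a,b) := ( (∫_D x̃₁φ² dx)² + (∫_D x̃₂φ² dx)² + 4(∫_D φ² dx)²/Area(D) ) / ∫_D Φ² dx equals 4; hence 8/3 + (2/3)·Q(a,b) = 16/3 for all (a,b) ≠ (0,0). -/

import Mathlib

open MeasureTheory

open Real Set intervalIntegral

private lemma iadd {a b : ℝ} {f g : ℝ → ℝ} (hf : Continuous f) (hg : Continuous g) {A B : ℝ}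
    (hA : ∫ θ in a..b, f θ = A) (hB : ∫ θ in a..b, g θ = B) :
    ∫ θ in a..b, (f θ + g θ) = A + B := by
  rw [integral_add (hf.intervalIntegrable _ _) (hg.intervalIntegrable _ _), hA, hB]

private lemma sin_four_pi : Real.sin (4 * π) = 0 := by
  have := Real.sin_int_mul_pi 4; norm_num at this; exact this

private lemma trig_master (c0 c3 c4 c5 c6 c7 c8 c9 c10 c11 c12 c13 c14 : ℝ) :
    ∫ θ in (-π)..π, (c0 + c3 * cos θ ^ 2 + c4 * (sin θ * cos θ) + c5 * sin θ ^ 2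
      + c6 * cos θ ^ 3 + c7 * (sin θ * cos θ ^ 2) + c8 * (sin θ ^ 2 * cos θ)
      + c9 * sin θ ^ 3 + c10 * cos θ ^ 4 + c11 * (sin θ * cos θ ^ 3)
      + c12 * (sin θ ^ 2 * cos θ ^ 2) + c13 * (sin θ ^ 3 * cos θ) + c14 * sin θ ^ 4)
    = c0 * (2 * π) + c3 * π + c5 * π + c10 * (3 * π / 4) + c12 * (π / 4)
      + c14 * (3 * π / 4) := by
  refine Eq.trans ?_ (by ring :
    c0 * (2 * π) + c3 * π + c4 * 0 + c5 * π + c6 * 0 + c7 * 0 + c8 * 0 + c9 * 0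
      + c10 * (3 * π / 4) + c11 * 0 + c12 * (π / 4) + c13 * 0 + c14 * (3 * π / 4)
    = c0 * (2 * π) + c3 * π + c5 * π + c10 * (3 * π / 4) + c12 * (π / 4) + c14 * (3 * π / 4))
  repeat refine iadd (by fun_prop) (by fun_prop) ?_ ?_
  · rw [intervalIntegral.integral_const, smul_eq_mul]; ring
  · rw [intervalIntegral.integral_const_mul, integral_cos_sq]; simp
  · rw [intervalIntegral.integral_const_mul, integral_sin_mul_cos₁]; simp
  · rw [intervalIntegral.integral_const_mul, integral_sin_sq]; simp
  · rw [intervalIntegral.integral_const_mul, integral_cos_pow_three]; simp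
  · rw [intervalIntegral.integral_const_mul, integral_sin_mul_cos_sq]; simp
  · rw [intervalIntegral.integral_const_mul, integral_sin_sq_mul_cos]; simp
  · rw [intervalIntegral.integral_const_mul, integral_sin_pow_three]; simp
  · rw [intervalIntegral.integral_const_mul, show (4:ℕ) = 2 + 2 from rfl, integral_cos_pow, integral_cos_sq]
    simp only [Real.sin_pi, Real.sin_neg, Real.cos_pi, Real.cos_neg, neg_neg]; ring
  · rw [intervalIntegral.integral_const_mul]
    have := @integral_sin_pow_mul_cos_pow_odd (-π) π 1 1
    norm_num at this; rw [this]
  · rw [intervalIntegral.integral_const_mul, integral_sin_sq_mul_cos_sq]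
    simp only [mul_neg, Real.sin_neg, sin_four_pi]; ring
  · rw [intervalIntegral.integral_const_mul]
    have := @integral_sin_pow_odd_mul_cos_pow (-π) π 1 1
    norm_num at this; rw [this]
  · rw [intervalIntegral.integral_const_mul, show (4:ℕ) = 2 + 2 from rfl, integral_sin_pow, integral_sin_sq]
    simp only [Real.sin_pi, Real.sin_neg, Real.cos_pi, Real.cos_neg, neg_neg]; ring

private lemma poly_master (d1 d3 d5 : ℝ) :
    ∫ r in (0:ℝ)..1, (d1 * r + d3 * r ^ 3 + d5 * r ^ 5) = d1 / 2 + d3 / 4 + d5 / 6 := by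
  refine Eq.trans ?_ (by ring : d1 / 2 + d3 / 4 + d5 / 6 = d1 / 2 + d3 / 4 + d5 / 6)
  repeat refine iadd (by fun_prop) (by fun_prop) ?_ ?_
  · rw [intervalIntegral.integral_const_mul, integral_id]; norm_num; ring
  · rw [intervalIntegral.integral_const_mul, integral_pow]; norm_num; ring
  · rw [intervalIntegral.integral_const_mul, integral_pow]; norm_num; ring

private lemma disc_polar {g : ℝ × ℝ → ℝ} (hg : Continuous g) :
    ∫ p in {p : ℝ × ℝ | p.1 ^ 2 + p.2 ^ 2 ≤ 1}, g p
      = ∫ r in (0:ℝ)..1, ∫ θ in (-π)..π, r * g (r * cos θ, r * sin θ) := by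
  have hDm : MeasurableSet {p : ℝ × ℝ | p.1 ^ 2 + p.2 ^ 2 ≤ 1} :=
    (isClosed_le (by fun_prop) continuous_const).measurableSet
  set F : ℝ × ℝ → ℝ := fun q => q.1 * g (q.1 * cos q.2, q.1 * sin q.2) with hF
  have hFc : Continuous F := by fun_prop
  rw [← MeasureTheory.integral_indicator hDm,
    ← integral_comp_polarCoord_symm (Set.indicator {p : ℝ × ℝ | p.1 ^ 2 + p.2 ^ 2 ≤ 1} g)]
  have key : EqOn
      (fun p : ℝ × ℝ => p.1 • (Set.indicator {p : ℝ × ℝ | p.1 ^ 2 + p.2 ^ 2 ≤ 1} g)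
        (polarCoord.symm p))
      ((Ioc (0:ℝ) 1 ×ˢ Ioo (-π) π).indicator F) polarCoord.target := by
    rintro ⟨r, θ⟩ hp
    rw [polarCoord_target] at hp
    obtain ⟨hr, hθ⟩ := hp
    simp only [mem_Ioi] at hr
    simp only [polarCoord_symm_apply, smul_eq_mul, Set.indicator_apply, Set.mem_setOf_eq,
      Set.mem_prod, Set.mem_Ioc, hF]
    have h1 : (r * cos θ) ^ 2 + (r * sin θ) ^ 2 = r ^ 2 := by
      have := sin_sq_add_cos_sq θ; ring_nf; nlinarith [this]
    simp only [h1]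
    by_cases hle : r ≤ 1
    · have : r ^ 2 ≤ 1 := by nlinarith
      simp [this, hle, hr, hθ]
    · have : ¬ r ^ 2 ≤ 1 := by push_neg at hle ⊢; nlinarith
      simp [this, hle]
  rw [setIntegral_congr_fun polarCoord.open_target.measurableSet key]
  rw [polarCoord_target, setIntegral_indicator ((measurableSet_Ioc).prod measurableSet_Ioo),
    Set.prod_inter_prod, Set.inter_eq_self_of_subset_right Ioc_subset_Ioi_self,
    Set.inter_self]
  have hint : IntegrableOn F (Ioc (0:ℝ) 1 ×ˢ Ioo (-π) π) (volume.prod volume) := by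
    have h1 : IntegrableOn F (Icc (0:ℝ) 1 ×ˢ Icc (-π) π) volume :=
      hFc.continuousOn.integrableOn_compact (isCompact_Icc.prod isCompact_Icc)
    exact (h1.mono_set (Set.prod_mono Ioc_subset_Icc_self Ioo_subset_Icc_self))
  rw [show (volume : Measure (ℝ × ℝ)) = (volume.prod volume) from Measure.volume_eq_prod ℝ ℝ]
  rw [setIntegral_prod F hint]
  rw [intervalIntegral.integral_of_le (by norm_num : (0:ℝ) ≤ 1)]
  refine setIntegral_congr_fun measurableSet_Ioc fun r _ => ?_
  rw [intervalIntegral.integral_of_le (by linarith [pi_pos] : -π ≤ π),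
    integral_Ioc_eq_integral_Ioo]

/-- The unit-disc computation from Section 5: the quantity `Q(a,b)` of Theorem 1.1,
computed for the closed unit disc `D`, equals `4` for every `(a,b) ≠ (0,0)`, hence
`8/3 + (2/3)·Q(a,b) = 16/3`. -/
theorem stmt_18 (D : Set (ℝ × ℝ))
    (hD : D = {p : ℝ × ℝ | p.1 ^ 2 + p.2 ^ 2 ≤ 1})
    (x1 x2 : ℝ × ℝ → ℝ)
    (hx1 : x1 = fun p => 2 / Real.sqrt Real.pi * p.1)
    (hx2 : x2 = fun p => 2 / Real.sqrt Real.pi * p.2)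
    (Q : ℝ → ℝ → ℝ)
    (hQ : ∀ a b : ℝ, Q a b =
      ((∫ p in D, x1 p * (a * x1 p + b * x2 p) ^ 2) ^ 2 +
         (∫ p in D, x2 p * (a * x1 p + b * x2 p) ^ 2) ^ 2 +
         4 * (∫ p in D, (a * x1 p + b * x2 p) ^ 2) ^ 2 / (volume D).toReal) /
        ∫ p in D, ((a * x1 p + b * x2 p) ^ 2 - 1 / Real.pi * (a ^ 2 + b ^ 2)) ^ 2) :
    ∀ a b : ℝ, ¬(a = 0 ∧ b = 0) →
      Q a b = 4 ∧ 8 / 3 + 2 / 3 * Q a b = (16 : ℝ) / 3 := by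
  intro a b hab
  have hπ : (0:ℝ) < π := pi_pos
  have hs : (2 / Real.sqrt π) ^ 2 = 4 / π := by
    rw [div_pow, sq_sqrt hπ.le]; norm_num
  set s : ℝ := 2 / Real.sqrt π with hsdef
  have hs4 : s ^ 4 = 16 / π ^ 2 := by
    rw [show s ^ 4 = (s ^ 2) ^ 2 from by ring, hs]; rw [div_pow]; norm_num
  have hc : 0 < a ^ 2 + b ^ 2 := by
    rcases not_and_or.mp hab with h | h
    · have : a ^ 2 > 0 := by positivity
      nlinarith [sq_nonneg b]
    · have : b ^ 2 > 0 := by positivity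
      nlinarith [sq_nonneg a]
  -- volume of the disc
  have hvol : (volume D).toReal = π := by
    have h := disc_polar (g := fun _ : ℝ × ℝ => (1:ℝ)) continuous_const
    rw [setIntegral_const, smul_eq_mul, mul_one] at h
    rw [hD, ← measureReal_def, h,
      intervalIntegral.integral_congr (g := fun r : ℝ => 2 * π * r)
        (fun r _ => by
          rw [intervalIntegral.integral_congr (g := fun _ : ℝ => r) (fun θ _ => by ring),
            intervalIntegral.integral_const, smul_eq_mul]; ring),
      intervalIntegral.integral_const_mul, integral_id]
    ring
  -- first integral: odd, equals 0
  have h1 : (∫ p in D, s * p.1 * (a * (s * p.1) + b * (s * p.2)) ^ 2) = 0 := by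
    rw [hD, disc_polar (by fun_prop)]
    rw [intervalIntegral.integral_congr (g := fun _ : ℝ => (0:ℝ)) (fun r _ => ?_)]
    · simp
    · rw [intervalIntegral.integral_congr
        (g := fun θ => (0:ℝ) + 0 * cos θ ^ 2 + 0 * (sin θ * cos θ) + 0 * sin θ ^ 2
          + (s ^ 3 * r ^ 4 * a ^ 2) * cos θ ^ 3
          + (2 * s ^ 3 * r ^ 4 * a * b) * (sin θ * cos θ ^ 2)
          + (s ^ 3 * r ^ 4 * b ^ 2) * (sin θ ^ 2 * cos θ)
          + 0 * sin θ ^ 3 + 0 * cos θ ^ 4 + 0 * (sin θ * cos θ ^ 3)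
          + 0 * (sin θ ^ 2 * cos θ ^ 2) + 0 * (sin θ ^ 3 * cos θ) + 0 * sin θ ^ 4)
        (fun θ _ => by ring), trig_master]
      ring
  have h2 : (∫ p in D, s * p.2 * (a * (s * p.1) + b * (s * p.2)) ^ 2) = 0 := by
    rw [hD, disc_polar (by fun_prop)]
    rw [intervalIntegral.integral_congr (g := fun _ : ℝ => (0:ℝ)) (fun r _ => ?_)]
    · simp
    · rw [intervalIntegral.integral_congr
        (g := fun θ => (0:ℝ) + 0 * cos θ ^ 2 + 0 * (sin θ * cos θ) + 0 * sin θ ^ 2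
          + 0 * cos θ ^ 3
          + (s ^ 3 * r ^ 4 * a ^ 2) * (sin θ * cos θ ^ 2)
          + (2 * s ^ 3 * r ^ 4 * a * b) * (sin θ ^ 2 * cos θ)
          + (s ^ 3 * r ^ 4 * b ^ 2) * sin θ ^ 3 + 0 * cos θ ^ 4 + 0 * (sin θ * cos θ ^ 3)
          + 0 * (sin θ ^ 2 * cos θ ^ 2) + 0 * (sin θ ^ 3 * cos θ) + 0 * sin θ ^ 4)
        (fun θ _ => by ring), trig_master]
      ring
  have h3 : (∫ p in D, (a * (s * p.1) + b * (s * p.2)) ^ 2) = a ^ 2 + b ^ 2 := by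
    rw [hD, disc_polar (by fun_prop)]
    rw [intervalIntegral.integral_congr
      (g := fun r : ℝ => (π * s ^ 2 * (a ^ 2 + b ^ 2)) * r ^ 3) (fun r _ => ?_)]
    · rw [intervalIntegral.integral_const_mul, integral_pow, hs]
      field_simp
      ring
    · rw [intervalIntegral.integral_congr
        (g := fun θ => (0:ℝ) + (s ^ 2 * r ^ 3 * a ^ 2) * cos θ ^ 2
          + (2 * s ^ 2 * r ^ 3 * a * b) * (sin θ * cos θ)
          + (s ^ 2 * r ^ 3 * b ^ 2) * sin θ ^ 2
          + 0 * cos θ ^ 3 + 0 * (sin θ * cos θ ^ 2) + 0 * (sin θ ^ 2 * cos θ)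
          + 0 * sin θ ^ 3 + 0 * cos θ ^ 4 + 0 * (sin θ * cos θ ^ 3)
          + 0 * (sin θ ^ 2 * cos θ ^ 2) + 0 * (sin θ ^ 3 * cos θ) + 0 * sin θ ^ 4)
        (fun θ _ => by ring), trig_master]
      ring
  have h4 : (∫ p in D, ((a * (s * p.1) + b * (s * p.2)) ^ 2 - 1 / π * (a ^ 2 + b ^ 2)) ^ 2)
      = (a ^ 2 + b ^ 2) ^ 2 / π := by
    rw [hD, disc_polar (by fun_prop)]
    rw [intervalIntegral.integral_congr
      (g := fun r : ℝ => (2 * π * (1 / π * (a ^ 2 + b ^ 2)) ^ 2) * r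
        + (-2 * π * (1 / π * (a ^ 2 + b ^ 2)) * s ^ 2 * (a ^ 2 + b ^ 2)) * r ^ 3
        + (3 * π / 4 * s ^ 4 * (a ^ 2 + b ^ 2) ^ 2) * r ^ 5) (fun r _ => ?_)]
    · rw [poly_master, hs, hs4]
      field_simp
      ring
    · rw [intervalIntegral.integral_congr
        (g := fun θ => (r * (1 / π * (a ^ 2 + b ^ 2)) ^ 2)
          + (-2 * (1 / π * (a ^ 2 + b ^ 2)) * s ^ 2 * r ^ 3 * a ^ 2) * cos θ ^ 2
          + (-4 * (1 / π * (a ^ 2 + b ^ 2)) * s ^ 2 * r ^ 3 * a * b) * (sin θ * cos θ)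
          + (-2 * (1 / π * (a ^ 2 + b ^ 2)) * s ^ 2 * r ^ 3 * b ^ 2) * sin θ ^ 2
          + 0 * cos θ ^ 3 + 0 * (sin θ * cos θ ^ 2) + 0 * (sin θ ^ 2 * cos θ)
          + 0 * sin θ ^ 3
          + (s ^ 4 * r ^ 5 * a ^ 4) * cos θ ^ 4
          + (4 * s ^ 4 * r ^ 5 * a ^ 3 * b) * (sin θ * cos θ ^ 3)
          + (6 * s ^ 4 * r ^ 5 * a ^ 2 * b ^ 2) * (sin θ ^ 2 * cos θ ^ 2)
          + (4 * s ^ 4 * r ^ 5 * a * b ^ 3) * (sin θ ^ 3 * cos θ)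
          + (s ^ 4 * r ^ 5 * b ^ 4) * sin θ ^ 4)
        (fun θ _ => by ring), trig_master]
      ring
  have hQ4 : Q a b = 4 := by
    rw [hQ a b]
    simp only [hx1, hx2]
    rw [h1, h2, h3, h4, hvol]
    rw [div_eq_iff (by positivity : (a ^ 2 + b ^ 2) ^ 2 / π ≠ 0)]
    ring
  exact ⟨hQ4, by rw [hQ4]; norm_num⟩
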